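/- Let u ∈ C²([0,1]) satisfy u(x) = u(1−x) for all x ∈ [0,1], and suppose W(u) < c₀², where W(u) = ∫₀¹ u''(x)²/(1+u'(x)²)^{5/2} dx and c₀ = ∫_{-∞}^{∞} (1+t²)^{-5/4} dt. Then for every x ∈ [0,1], |u'(x)| ≤ G⁻¹( √(W(u))/2 ), where G(x) = ∫₀ˣ (1+t²)^{-5/4} dt and G⁻¹ : (−c₀/2, c₀/2) → ℝ is its inverse. -/

import Mathlib

open Real MeasureTheory

/-- `G x = ∫₀ˣ (1+t²)^{-5/4} dt`. -/
noncomputable def G (x : ℝ) : ℝ := ∫ t in (0:ℝ)..x, (1 + t ^ 2) ^ (-(5:ℝ)/4)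

/-- `c₀ = ∫_ℝ (1+t²)^{-5/4} dt`. -/
noncomputable def c₀ : ℝ := ∫ t : ℝ, (1 + t ^ 2) ^ (-(5:ℝ)/4)

/-- The inverse of `G` (a strictly increasing odd bijection of `ℝ` onto `(-c₀/2, c₀/2)`). -/
noncomputable def Ginv : ℝ → ℝ := Function.invFun G

/-- The elastic energy `W(u) = ∫₀¹ u''²/(1+u'²)^{5/2} dx`. -/
noncomputable def W (u : ℝ → ℝ) : ℝ :=
  ∫ x in (0:ℝ)..1, iteratedDeriv 2 u x ^ 2 / (1 + deriv u x ^ 2) ^ ((5:ℝ)/2)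

lemma hpos (t : ℝ) : (0:ℝ) < 1 + t ^ 2 := by positivity

lemma hcont : Continuous (fun t : ℝ => (1 + t ^ 2) ^ (-(5:ℝ)/4)) := by
  apply Continuous.rpow_const (by continuity)
  intro t; exact Or.inl (ne_of_gt (hpos t))

lemma h_int : Integrable (fun t : ℝ => (1 + t ^ 2) ^ (-(5:ℝ)/4)) := by
  refine integrable_inv_one_add_sq.mono (hcont.aestronglyMeasurable) ?_
  filter_upwards with t
  rw [Real.norm_of_nonneg (Real.rpow_nonneg (hpos t).le _),
    Real.norm_of_nonneg (by positivity)]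
  rw [← Real.rpow_neg_one (1 + t^2)]
  exact Real.rpow_le_rpow_of_exponent_le (by nlinarith [sq_nonneg t]) (by norm_num)

lemma c0_pos : 0 < c₀ := by
  rw [c₀, integral_pos_iff_support_of_nonneg
    (fun t => (Real.rpow_pos_of_pos (hpos t) _).le) h_int]
  have : (Function.support fun t : ℝ => (1 + t ^ 2) ^ (-(5:ℝ)/4)) = Set.univ :=
    Set.eq_univ_of_forall fun t => (Real.rpow_pos_of_pos (hpos t) _).ne'
  rw [this]; simp

lemma G_hasDerivAt (x : ℝ) : HasDerivAt G ((1 + x ^ 2) ^ (-(5:ℝ)/4)) x :=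
  intervalIntegral.integral_hasDerivAt_right (hcont.intervalIntegrable _ _)
    (hcont.stronglyMeasurableAtFilter _ _) hcont.continuousAt

lemma G_mono : StrictMono G :=
  strictMono_of_deriv_pos fun x => by
    rw [(G_hasDerivAt x).deriv]; exact Real.rpow_pos_of_pos (hpos x) _

lemma G_cont : Continuous G :=
  continuous_iff_continuousAt.2 fun x => (G_hasDerivAt x).continuousAt

lemma G_zero : G 0 = 0 := intervalIntegral.integral_same

lemma G_neg (t : ℝ) : G (-t) = - G t := by
  have h1 := intervalIntegral.integral_comp_neg (a := (0:ℝ)) (b := t)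
    (f := fun s : ℝ => (1 + s ^ 2) ^ (-(5:ℝ)/4))
  simp only [neg_sq, neg_zero] at h1
  rw [G, G, intervalIntegral.integral_symm, ← h1]

lemma G_tendsto : Filter.Tendsto G Filter.atTop (nhds (c₀ / 2)) := by
  have h2 : ∫ t in Set.Ioi (0:ℝ), (1 + t ^ 2) ^ (-(5:ℝ)/4) = c₀ / 2 := by
    have habs : ∫ t : ℝ, (1 + |t| ^ 2) ^ (-(5:ℝ)/4)
        = 2 * ∫ t in Set.Ioi (0:ℝ), (1 + t ^ 2) ^ (-(5:ℝ)/4) :=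
      integral_comp_abs (f := fun s : ℝ => (1 + s ^ 2) ^ (-(5:ℝ)/4))
    simp only [sq_abs] at habs
    rw [c₀, habs]; ring
  rw [← h2]
  exact intervalIntegral_tendsto_integral_Ioi 0 h_int.integrableOn Filter.tendsto_id

lemma G_surj {y : ℝ} (h0 : 0 ≤ y) (hy : y < c₀ / 2) : ∃ x, G x = y := by
  obtain ⟨x, hx⟩ := ((tendsto_order.1 G_tendsto).1 y hy).exists
  have hx0 : (0:ℝ) ≤ x := by
    by_contra h; push_neg at h
    have := G_mono h; rw [G_zero] at this; linarith
  obtain ⟨z, _, hz⟩ := intermediate_value_Icc hx0 G_cont.continuousOn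
    (⟨by rwa [G_zero], hx.le⟩ : y ∈ Set.Icc (G 0) (G x))
  exact ⟨z, hz⟩

lemma G_abs (t : ℝ) : G |t| = |G t| := by
  rcases le_or_gt 0 t with h | h
  · rw [abs_of_nonneg h, abs_of_nonneg (by rw [← G_zero]; exact G_mono.monotone h)]
  · rw [abs_of_neg h, G_neg, abs_of_neg (by rw [← G_zero]; exact G_mono h)]

lemma cs_interval {g : ℝ → ℝ} (hg : Continuous g) {a b : ℝ} (hab : a ≤ b) :
    (∫ t in a..b, g t) ^ 2 ≤ (b - a) * ∫ t in a..b, g t ^ 2 := by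
  set μ := volume.restrict (Set.Ioc a b) with hμ
  have hint2 : Integrable (fun t => g t ^ 2) μ := ((hg.pow 2).integrableOn_Ioc)
  have hB : ∫ _t : ℝ, (1:ℝ) ∂μ = b - a := by
    rw [integral_const, smul_eq_mul, mul_one, hμ, measureReal_restrict_apply_univ, measureReal_def,
      Real.volume_Ioc, ENNReal.toReal_ofReal (by linarith)]
  have hmem1 : MemLp (fun _t : ℝ => (1:ℝ)) (ENNReal.ofReal 2) μ := memLp_const _
  have hmem : MemLp (fun t => |g t|) (ENNReal.ofReal 2) μ := by
    rw [show ENNReal.ofReal 2 = 2 by simp]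
    rw [memLp_two_iff_integrable_sq (hg.abs.aestronglyMeasurable.restrict)]
    simpa [sq_abs] using hint2
  have hH := integral_mul_le_Lp_mul_Lq_of_nonneg
    (Real.HolderConjugate.two_two : Real.HolderConjugate 2 2)
    (Filter.Eventually.of_forall fun t => abs_nonneg (g t))
    (Filter.Eventually.of_forall fun _ => zero_le_one) hmem hmem1
  simp only [mul_one, one_pow] at hH
  have hA : ∫ t, |g t| ^ (2:ℝ) ∂μ = ∫ t in a..b, g t ^ 2 := by
    rw [intervalIntegral.integral_of_le hab]
    congr 1; ext t
    rw [Real.rpow_two, sq_abs]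
  have hB2 : ∫ t : ℝ, (1:ℝ) ^ (2:ℝ) ∂μ = b - a := by simpa using hB
  rw [hA, hB2] at hH
  have habs : |∫ t in a..b, g t| ≤ ∫ t, |g t| ∂μ := by
    rw [intervalIntegral.integral_of_le hab]
    calc |∫ t, g t ∂μ| = ‖∫ t, g t ∂μ‖ := (Real.norm_eq_abs _).symm
      _ ≤ ∫ t, ‖g t‖ ∂μ := norm_integral_le_integral_norm _
      _ = ∫ t, |g t| ∂μ := by simp [Real.norm_eq_abs]
  have hI2 : (0:ℝ) ≤ ∫ t in a..b, g t ^ 2 :=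
    intervalIntegral.integral_nonneg hab fun t _ => sq_nonneg _
  calc (∫ t in a..b, g t) ^ 2 = |∫ t in a..b, g t| ^ 2 := (sq_abs _).symm
    _ ≤ (∫ t, |g t| ∂μ) ^ 2 := pow_le_pow_left₀ (abs_nonneg _) habs 2
    _ ≤ ((∫ t in a..b, g t ^ 2) ^ (1/(2:ℝ)) * (b - a) ^ (1/(2:ℝ))) ^ 2 :=
        pow_le_pow_left₀ (integral_nonneg fun t => abs_nonneg _) hH 2
    _ = (b - a) * ∫ t in a..b, g t ^ 2 := by
        rw [mul_pow, ← Real.rpow_natCast (_ ^ (1/(2:ℝ))) 2,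
          ← Real.rpow_natCast ((b-a) ^ (1/(2:ℝ))) 2,
          ← Real.rpow_mul hI2, ← Real.rpow_mul (by linarith)]
        norm_num [mul_comm]

/-- Gradient bound: if `u ∈ C²` is symmetric about `x = 1/2` and `W(u) < c₀²`, then
`|u'(x)| ≤ G⁻¹(√(W(u))/2)` for all `x ∈ [0,1]`. -/
theorem stmt_19 (u : ℝ → ℝ) (hu : ContDiff ℝ 2 u)
    (hsym : ∀ x ∈ Set.Icc (0:ℝ) 1, u x = u (1 - x))
    (hW : W u < c₀ ^ 2) :
    ∀ x ∈ Set.Icc (0:ℝ) 1, |deriv u x| ≤ Ginv (Real.sqrt (W u) / 2) := by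
  -- regularity
  have h2 : ContDiff ℝ (1+1) u := by norm_num at hu ⊢; exact hu
  obtain ⟨hdu, -, hp1⟩ := contDiff_succ_iff_deriv.mp h2
  obtain ⟨hdp, hqc⟩ := contDiff_one_iff_deriv.mp hp1
  set p : ℝ → ℝ := deriv u with hp_def
  set q : ℝ → ℝ := deriv p with hq_def
  have hpc : Continuous p := hp1.continuous
  -- symmetry of derivatives on (0,1)
  have hIoo : ∀ x : ℝ, x ∈ Set.Ioo (0:ℝ) 1 → (1 - x) ∈ Set.Ioo (0:ℝ) 1 := by
    intro x hx; exact ⟨by linarith [hx.2], by linarith [hx.1]⟩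
  have hp_symm : ∀ x ∈ Set.Ioo (0:ℝ) 1, p x = -p (1 - x) := by
    intro x hx
    have hev : u =ᶠ[nhds x] (fun y => u (1 - y)) :=
      Filter.eventuallyEq_of_mem (isOpen_Ioo.mem_nhds hx)
        (fun y hy => hsym y (Set.Ioo_subset_Icc_self hy))
    rw [hp_def, hev.deriv_eq, deriv_comp_const_sub]
  have hq_symm : ∀ x ∈ Set.Ioo (0:ℝ) 1, q x = q (1 - x) := by
    intro x hx
    have hev : p =ᶠ[nhds x] (fun y => -p (1 - y)) :=
      Filter.eventuallyEq_of_mem (isOpen_Ioo.mem_nhds hx) (fun y hy => hp_symm y hy)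
    rw [hq_def, hev.deriv_eq]
    have h1 : deriv (fun z : ℝ => -p z) (1 - x) = -q (1 - x) := deriv.neg
    have h2 := deriv_comp_const_sub (fun z : ℝ => -p z) 1 x
    rw [h2, h1, neg_neg]
  have hp_half : p (1/2 : ℝ) = 0 := by
    have := hp_symm (1/2) (by norm_num)
    norm_num at this
    linarith
  -- the energy density
  set f : ℝ → ℝ := fun x => q x ^ 2 * (1 + p x ^ 2) ^ (-(5:ℝ)/2) with hf_def
  set g : ℝ → ℝ := fun x => (1 + p x ^ 2) ^ (-(5:ℝ)/4) * q x with hg_def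
  have hfc : Continuous f := by
    apply (hqc.pow 2).mul
    apply Continuous.rpow_const (by continuity)
    intro t; exact Or.inl (ne_of_gt (hpos (p t)))
  have hgc : Continuous g := (hcont.comp hpc).mul hqc
  have hf_nonneg : ∀ t, 0 ≤ f t :=
    fun t => mul_nonneg (sq_nonneg _) (Real.rpow_nonneg (hpos (p t)).le _)
  have hg_sq : ∀ t, g t ^ 2 = f t := by
    intro t
    rw [hg_def, hf_def, mul_pow, ← Real.rpow_natCast ((1 + p t ^ 2) ^ (-(5:ℝ)/4)) 2,
      ← Real.rpow_mul (hpos (p t)).le]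
    ring_nf
  have hW_eq : W u = ∫ x in (0:ℝ)..1, f x := by
    rw [W]
    congr 1; ext x
    rw [hf_def, show iteratedDeriv 2 u = q by
      rw [hq_def, hp_def, iteratedDeriv_succ, iteratedDeriv_one]]
    simp only
    rw [show (-(5:ℝ)/2) = -((5:ℝ)/2) by norm_num, Real.rpow_neg (hpos (p x)).le,
      div_eq_mul_inv]
  -- FTC for G ∘ p
  have hftc : ∀ a b : ℝ, ∫ t in a..b, g t = G (p b) - G (p a) := by
    intro a b
    refine intervalIntegral.integral_eq_sub_of_hasDerivAt (f := fun t => G (p t)) (fun t _ => ?_)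
      (hgc.intervalIntegrable _ _)
    exact (G_hasDerivAt (p t)).comp t (hdp t).hasDerivAt
  -- symmetry of the integral
  have hsym_int : ∫ x in (1/2:ℝ)..1, f x = ∫ x in (0:ℝ)..(1/2), f x := by
    have step1 : ∫ x in (1/2:ℝ)..1, f x = ∫ x in (1/2:ℝ)..1, f (1 - x) := by
      rw [intervalIntegral.integral_of_le (by norm_num),
        intervalIntegral.integral_of_le (by norm_num),
        integral_Ioc_eq_integral_Ioo, integral_Ioc_eq_integral_Ioo]
      refine setIntegral_congr_fun measurableSet_Ioo (fun x hx => ?_)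
      have hx1 : x ∈ Set.Ioo (0:ℝ) 1 := ⟨by linarith [hx.1], hx.2⟩
      rw [hf_def]
      simp only
      rw [hq_symm x hx1, hp_symm x hx1, neg_sq]
    rw [step1, intervalIntegral.integral_comp_sub_left f 1]
    norm_num
  have hW_half : ∫ x in (1/2:ℝ)..1, f x = W u / 2 := by
    have hadd : (∫ x in (0:ℝ)..(1/2), f x) + ∫ x in (1/2:ℝ)..1, f x = ∫ x in (0:ℝ)..1, f x :=
      intervalIntegral.integral_add_adjacent_intervals
        (hfc.intervalIntegrable _ _) (hfc.intervalIntegrable _ _)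
    rw [hW_eq]; rw [hsym_int] at hadd ⊢; linarith
  have hW0 : 0 ≤ W u := by
    rw [hW_eq]
    exact intervalIntegral.integral_nonneg (by norm_num) fun t _ => hf_nonneg t
  -- the key bound |G (p x)| ≤ √(W u) / 2
  have key : ∀ x ∈ Set.Icc (0:ℝ) 1, |G (p x)| ≤ Real.sqrt (W u) / 2 := by
    intro x hx
    have hsq : G (p x) ^ 2 ≤ W u / 4 := by
      rcases le_total (1/2 : ℝ) x with hhalf | hhalf
      · have hcs := cs_interval hgc hhalf
        have hle : ∫ t in (1/2:ℝ)..x, g t ^ 2 ≤ W u / 2 := by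
          have hadd : (∫ t in (1/2:ℝ)..x, f t) + ∫ t in x..1, f t = ∫ t in (1/2:ℝ)..1, f t :=
            intervalIntegral.integral_add_adjacent_intervals
              (hfc.intervalIntegrable _ _) (hfc.intervalIntegrable _ _)
          have h1 : (0:ℝ) ≤ ∫ t in x..1, f t :=
            intervalIntegral.integral_nonneg hx.2 fun t _ => hf_nonneg t
          have : ∫ t in (1/2:ℝ)..x, g t ^ 2 = ∫ t in (1/2:ℝ)..x, f t := by
            congr 1; ext t; exact hg_sq t
          rw [this]; rw [hW_half] at hadd; linarith
        have hft : ∫ t in (1/2:ℝ)..x, g t = G (p x) := by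
          rw [hftc, hp_half, G_zero, sub_zero]
        rw [hft] at hcs
        have h2 : (0:ℝ) ≤ ∫ t in (1/2:ℝ)..x, g t ^ 2 :=
          intervalIntegral.integral_nonneg hhalf fun t _ => sq_nonneg _
        calc G (p x) ^ 2 ≤ (x - 1/2) * ∫ t in (1/2:ℝ)..x, g t ^ 2 := hcs
          _ ≤ (1/2) * (W u / 2) := by
              apply mul_le_mul (by linarith [hx.2]) hle h2 (by norm_num)
          _ = W u / 4 := by ring
      · have hcs := cs_interval hgc hhalf
        have hle : ∫ t in x..(1/2:ℝ), g t ^ 2 ≤ W u / 2 := by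
          have hadd : (∫ t in (0:ℝ)..x, f t) + ∫ t in x..(1/2:ℝ), f t
              = ∫ t in (0:ℝ)..(1/2), f t :=
            intervalIntegral.integral_add_adjacent_intervals
              (hfc.intervalIntegrable _ _) (hfc.intervalIntegrable _ _)
          have h1 : (0:ℝ) ≤ ∫ t in (0:ℝ)..x, f t :=
            intervalIntegral.integral_nonneg hx.1 fun t _ => hf_nonneg t
          have : ∫ t in x..(1/2:ℝ), g t ^ 2 = ∫ t in x..(1/2:ℝ), f t := by
            congr 1; ext t; exact hg_sq t
          rw [this]; rw [← hsym_int, hW_half] at hadd; linarith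
        have hft : ∫ t in x..(1/2:ℝ), g t = -G (p x) := by
          rw [hftc, hp_half, G_zero, zero_sub]
        rw [hft, neg_sq] at hcs
        have h2 : (0:ℝ) ≤ ∫ t in x..(1/2:ℝ), g t ^ 2 :=
          intervalIntegral.integral_nonneg hhalf fun t _ => sq_nonneg _
        calc G (p x) ^ 2 ≤ (1/2 - x) * ∫ t in x..(1/2:ℝ), g t ^ 2 := hcs
          _ ≤ (1/2) * (W u / 2) := by
              apply mul_le_mul (by linarith [hx.1]) hle h2 (by norm_num)
          _ = W u / 4 := by ring
    have := Real.abs_le_sqrt hsq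
    rwa [Real.sqrt_div hW0 4, show Real.sqrt 4 = 2 by
      rw [show (4:ℝ) = 2^2 by norm_num, Real.sqrt_sq (by norm_num)]] at this
  -- conclude via G's inverse
  have hy0 : 0 ≤ Real.sqrt (W u) / 2 := by positivity
  have hyc : Real.sqrt (W u) / 2 < c₀ / 2 := by
    have : Real.sqrt (W u) < c₀ := by
      have := Real.sqrt_lt_sqrt hW0 hW
      rwa [show c₀ ^ 2 = c₀ * c₀ by ring, Real.sqrt_mul_self c0_pos.le] at this
    linarith
  obtain ⟨z, hz⟩ := G_surj hy0 hyc
  have hGinv : G (Ginv (Real.sqrt (W u) / 2)) = Real.sqrt (W u) / 2 :=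
    Function.invFun_eq ⟨z, hz⟩
  intro x hx
  rw [← G_mono.le_iff_le, hGinv, G_abs]
  exact key x hx
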